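/- arXiv:2410.14870 — 3 statements merged into one kernel-verified Lean document; each statement's English description precedes it below -/
import Mathlib

section
/- For every t > 0 and x ∈ ℂ, the Gaussian contour integral ∫_{C₀} e^{−i(z−x)²/(4t)} dz, where C₀ is the straight line through i in the direction e^{−iπ/4} (from e^{3iπ/4}∞ to e^{−iπ/4}∞), equals e^{−iπ/4}·2√(πt); in particular the value is independent of x. -/
open MeasureTheory Complex Filter Set

/-- The Gaussian contour integral over the line `C₀ = {i + e^{-iπ/4}s : s ∈ ℝ}`
(from `e^{3iπ/4}∞` to `e^{-iπ/4}∞`) of `e^{-i(z-x)²/(4t)}` equals `e^{-iπ/4}·2√(πt)`,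
independently of `x ∈ ℂ`. -/
theorem stmt6 (t : ℝ) (ht : 0 < t) (x : ℂ) :
    (∫ s : ℝ,
        Complex.exp (-Complex.I *
            ((Complex.I + Complex.exp (-(Real.pi / 4) * Complex.I) * s) - x) ^ 2 / (4 * t)) *
          Complex.exp (-(Real.pi / 4) * Complex.I))
      = Complex.exp (-(Real.pi / 4) * Complex.I) * 2 * Real.sqrt (Real.pi * t) := by
  have ht' : (t : ℂ) ≠ 0 := by exact_mod_cast ht.ne'
  set ω : ℂ := Complex.exp (-(Real.pi / 4) * Complex.I) with hω
  have hω2 : ω ^ 2 = -Complex.I := by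
    rw [hω, sq, ← Complex.exp_add]
    have : -(↑Real.pi / 4) * Complex.I + -(↑Real.pi / 4) * Complex.I
        = (↑(-(Real.pi / 2)) : ℂ) * Complex.I := by push_cast; ring
    rw [this, Complex.exp_mul_I, ← Complex.ofReal_cos, ← Complex.ofReal_sin,
      Real.cos_neg, Real.sin_neg, Real.cos_pi_div_two, Real.sin_pi_div_two]
    simp
  set b : ℂ := -(1 / (4 * t)) with hb
  set c : ℂ := -Complex.I * ω * (Complex.I - x) / (2 * t) with hc
  set d : ℂ := -Complex.I * (Complex.I - x) ^ 2 / (4 * t) with hd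
  have hbre : b.re < 0 := by
    have : b = ((-(1 / (4 * t)) : ℝ) : ℂ) := by rw [hb]; push_cast; ring
    rw [this, Complex.ofReal_re]
    rw [neg_lt_zero]
    positivity
  have key : ∀ s : ℝ,
      -Complex.I * ((Complex.I + ω * s) - x) ^ 2 / (4 * t) = b * s ^ 2 + c * s + d := by
    intro s
    rw [hb, hc, hd]
    have h4t : (4 : ℂ) * t ≠ 0 := by
      simp [ht']
    field_simp
    ring_nf
    rw [show (ω ^ 2 : ℂ) = -Complex.I from hω2]
    simp [pow_succ, Complex.I_mul_I]
    ring
  rw [MeasureTheory.integral_mul_const]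
  have : (∫ s : ℝ, Complex.exp (-Complex.I * ((Complex.I + ω * s) - x) ^ 2 / (4 * t)))
      = ∫ s : ℝ, Complex.exp (b * s ^ 2 + c * s + d) := by
    congr 1; ext s; rw [key s]
  rw [this, integral_cexp_quadratic hbre c d]
  have hc2 : c ^ 2 = Complex.I * (Complex.I - x) ^ 2 / (4 * (t : ℂ) ^ 2) := by
    rw [hc, div_pow]
    rw [show (-Complex.I * ω * (Complex.I - x)) ^ 2
        = (ω ^ 2) * (Complex.I ^ 2 * (Complex.I - x) ^ 2) by ring, hω2, Complex.I_sq]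
    field_simp
    ring
  have hd0 : d - c ^ 2 / (4 * b) = 0 := by
    rw [hd, hc2, hb]
    field_simp
    ring
  have hpow : ((↑Real.pi : ℂ) / -b) ^ (1 / 2 : ℂ) = (2 * Real.sqrt (Real.pi * t) : ℝ) := by
    have h1 : ((↑Real.pi : ℂ) / -b) = ((4 * Real.pi * t : ℝ) : ℂ) := by
      rw [hb]
      push_cast
      field_simp
    rw [h1, show (1 / 2 : ℂ) = ((1 / 2 : ℝ) : ℂ) by push_cast; ring,
      ← Complex.ofReal_cpow (by positivity)]
    norm_cast
    rw [← Real.sqrt_eq_rpow, show (4 : ℝ) * Real.pi * t = 2 ^ 2 * (Real.pi * t) by ring,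
      Real.sqrt_mul (by positivity), Real.sqrt_sq (by norm_num)]
  rw [hd0, hpow, Complex.exp_zero, mul_one]
  push_cast
  ring
end

section
/- Let t, ε > 0 and x ∈ ℂ, and for a contour C₀ from e^{3iπ/4}∞ to e^{−iπ/4}∞ passing below z = i, define I_P(t,x) := ∫_{C₀} e^{−i(z−x)²/(4t)} (z−i)^{−P} dz for integers P ≥ 0. Then for P ≥ 2 the recursion I_P(t,x) = [i(x−i)/(2(P−1)t)] I_{P−1}(t,x) − [i/(2(P−1)t)] I_{P−2}(t,x) holds. -/
open MeasureTheory Complex Filter Set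

/-- The contour `C₀`: the line through `-i` in the direction `e^{-iπ/4}` (from
`e^{3iπ/4}∞` to `e^{-iπ/4}∞`, passing below `z = i`). -/
noncomputable def c0path (s : ℝ) : ℂ := -Complex.I + Complex.exp (-(Real.pi / 4) * Complex.I) * s

/-- `I_P(t,x) = ∫_{C₀} e^{-i(z-x)²/(4t)} (z-i)^{-P} dz`. -/
noncomputable def Icontour (t : ℝ) (x : ℂ) (P : ℕ) : ℂ :=
  ∫ s : ℝ, Complex.exp (-Complex.I * (c0path s - x) ^ 2 / (4 * t)) *
      (c0path s - Complex.I) ^ (-(P : ℤ)) * Complex.exp (-(Real.pi / 4) * Complex.I)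

namespace Stmt13Aux

noncomputable def ω : ℂ := Complex.exp (-(Real.pi / 4) * Complex.I)

lemma omega_re : ω.re = Real.sqrt 2 / 2 := by
  simp [ω, Complex.exp_re, Real.cos_pi_div_four]

lemma omega_im : ω.im = -(Real.sqrt 2 / 2) := by
  simp [ω, Complex.exp_im, Real.sin_pi_div_four]

lemma omega_sq : ω * ω = -Complex.I := by
  rw [ω, ← Complex.exp_add]
  have h : -(Real.pi / 4) * Complex.I + -(Real.pi / 4) * Complex.I
      = (↑(-(Real.pi / 2)) : ℂ) * Complex.I := by push_cast; ring
  rw [h, Complex.exp_mul_I]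
  simp [← Complex.ofReal_cos, ← Complex.ofReal_sin]

lemma c0_eq (s : ℝ) : c0path s = -Complex.I + ω * s := rfl

lemma one_le_norm (s : ℝ) : 1 ≤ ‖c0path s - Complex.I‖ := by
  have h2 : Real.sqrt 2 ^ 2 = 2 := Real.sq_sqrt (by norm_num)
  have hsq : 1 ≤ Complex.normSq (c0path s - Complex.I) := by
    rw [c0_eq]
    simp only [Complex.normSq_apply, Complex.sub_re, Complex.sub_im, Complex.add_re,
      Complex.add_im, Complex.mul_re, Complex.mul_im, Complex.neg_re, Complex.neg_im,
      Complex.I_re, Complex.I_im, Complex.ofReal_re, Complex.ofReal_im, omega_re, omega_im]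
    nlinarith [sq_nonneg (s + Real.sqrt 2), Real.sqrt_nonneg 2]
  nlinarith [Complex.sq_norm (c0path s - Complex.I), norm_nonneg (c0path s - Complex.I)]

lemma hne (s : ℝ) : c0path s - Complex.I ≠ 0 := by
  intro h
  have := one_le_norm s
  rw [h] at this; simp at this; linarith

noncomputable def uu (t : ℝ) (x : ℂ) : ℂ := -Complex.I * ω * (-Complex.I - x) / (2 * t)
noncomputable def vv (t : ℝ) (x : ℂ) : ℂ := -Complex.I * (-Complex.I - x) ^ 2 / (4 * t)

lemma exponent_eq (t : ℝ) (ht : 0 < t) (x : ℂ) (s : ℝ) :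
    -Complex.I * (c0path s - x) ^ 2 / (4 * t)
      = ((-(s ^ 2) / (4 * t) : ℝ) : ℂ) + (s : ℂ) * uu t x + vv t x := by
  have htc : (t : ℂ) ≠ 0 := by exact_mod_cast ht.ne'
  rw [c0_eq, uu, vv]
  push_cast
  linear_combination (-Complex.I * (s:ℂ) ^ 2 / (4 * (t:ℂ))) * omega_sq
    + ((s:ℂ) ^ 2 / (4 * (t:ℂ))) * Complex.I_sq

lemma integrable_g (t : ℝ) (ht : 0 < t) (x : ℂ) (n : ℤ) (hn : n ≤ 0) :
    Integrable (fun s : ℝ => Complex.exp (-Complex.I * (c0path s - x) ^ 2 / (4 * t)) *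
      (c0path s - Complex.I) ^ n) := by
  have h1 : Continuous c0path := by
    have : c0path = fun s : ℝ => -Complex.I + ω * s := rfl
    rw [this]; fun_prop
  have hcont : Continuous fun s : ℝ => Complex.exp (-Complex.I * (c0path s - x) ^ 2 / (4 * t)) *
      (c0path s - Complex.I) ^ n :=
    (((continuous_const.mul ((h1.sub continuous_const).pow 2))).div_const _).cexp.mul
      ((h1.sub continuous_const).zpow₀ n fun s => Or.inl (hne s))
  apply Integrable.mono'
    ((integrable_exp_neg_mul_sq (show (0:ℝ) < 1/(8*t) by positivity)).const_mul
      (Real.exp ((vv t x).re + 2 * t * (uu t x).re ^ 2)))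
    hcont.aestronglyMeasurable
  refine Filter.Eventually.of_forall fun s => ?_
  have hre : (-Complex.I * (c0path s - x) ^ 2 / (4 * t)).re
      = -(s ^ 2) / (4 * t) + s * (uu t x).re + (vv t x).re := by
    rw [exponent_eq t ht x s]
    simp only [Complex.add_re, Complex.mul_re, Complex.ofReal_re, Complex.ofReal_im]
    ring
  have h2 : ‖Complex.exp (-Complex.I * (c0path s - x) ^ 2 / (4 * t)) *
        (c0path s - Complex.I) ^ n‖
      = Real.exp ((-Complex.I * (c0path s - x) ^ 2 / (4 * t)).re)
        * ‖c0path s - Complex.I‖ ^ n := by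
    rw [norm_mul, Complex.norm_exp, norm_zpow]
  rw [h2, hre]
  have h3 : ‖c0path s - Complex.I‖ ^ n ≤ 1 :=
    zpow_le_one_of_nonpos₀ (one_le_norm s) hn
  have h4 : (0:ℝ) < ‖c0path s - Complex.I‖ ^ n := by
    have := one_le_norm s
    positivity
  calc Real.exp (-(s ^ 2) / (4 * t) + s * (uu t x).re + (vv t x).re)
        * ‖c0path s - Complex.I‖ ^ n
      ≤ Real.exp (-(s ^ 2) / (4 * t) + s * (uu t x).re + (vv t x).re) * 1 := by
        exact mul_le_mul_of_nonneg_left h3 (Real.exp_nonneg _)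
    _ ≤ Real.exp ((vv t x).re + 2 * t * (uu t x).re ^ 2) * Real.exp (-(1 / (8 * t)) * s ^ 2) := by
        rw [mul_one, ← Real.exp_add]
        apply Real.exp_le_exp.mpr
        have h6 : (0:ℝ) < 8 * t := by linarith
        have h5 : s * (uu t x).re - 2 * t * (uu t x).re ^ 2 ≤ s ^ 2 / (8 * t) := by
          rw [le_div_iff₀ h6]
          nlinarith [sq_nonneg (s - 4 * t * (uu t x).re)]
        have e1 : -s ^ 2 / (4 * t) = -(2 * (s ^ 2 / (8 * t))) := by
          field_simp; ring
        have e2 : -(1 / (8 * t)) * s ^ 2 = -(s ^ 2 / (8 * t)) := by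
          field_simp
        rw [e1, e2]
        linarith [h5]

/-- the integrand of `Icontour` with a general integer exponent -/
noncomputable def gI (t : ℝ) (x : ℂ) (m : ℤ) (s : ℝ) : ℂ :=
  Complex.exp (-Complex.I * (c0path s - x) ^ 2 / (4 * t)) * (c0path s - Complex.I) ^ m * ω

lemma integrable_gI (t : ℝ) (ht : 0 < t) (x : ℂ) (n : ℤ) (hn : n ≤ 0) :
    Integrable (gI t x n) :=
  (integrable_g t ht x n hn).mul_const ω

lemma hasDeriv_c0 (s : ℝ) : HasDerivAt c0path ω s := by
  have h : HasDerivAt (fun w : ℂ => -Complex.I + ω * w) ω (s : ℂ) := by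
    simpa using ((hasDerivAt_id (s : ℂ)).const_mul ω).const_add (-Complex.I)
  exact h.comp_ofReal

lemma hasDeriv_F (t : ℝ) (x : ℂ) (m : ℤ) (s : ℝ) :
    HasDerivAt (fun s : ℝ => Complex.exp (-Complex.I * (c0path s - x) ^ 2 / (4 * t)) *
        (c0path s - Complex.I) ^ m)
      (Complex.exp (-Complex.I * (c0path s - x) ^ 2 / (4 * t)) *
          (-Complex.I * (2 * (c0path s - x) * ω) / (4 * t)) * (c0path s - Complex.I) ^ m
        + Complex.exp (-Complex.I * (c0path s - x) ^ 2 / (4 * t)) *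
          ((m : ℂ) * (c0path s - Complex.I) ^ (m - 1) * ω)) s := by
  have hc := hasDeriv_c0 s
  have hq : HasDerivAt (fun s : ℝ => c0path s - x) ω s := hc.sub_const x
  have hq2 : HasDerivAt (fun s : ℝ => (c0path s - x) ^ 2) (2 * (c0path s - x) * ω) s := by
    have := (hasDerivAt_pow 2 (c0path s - x)).comp s hq
    simpa [mul_assoc, Function.comp_def] using this
  have he : HasDerivAt (fun s : ℝ => -Complex.I * (c0path s - x) ^ 2 / (4 * t))
      (-Complex.I * (2 * (c0path s - x) * ω) / (4 * t)) s :=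
    (hq2.const_mul (-Complex.I)).div_const _
  have hh : HasDerivAt (fun s : ℝ => c0path s - Complex.I) ω s := hc.sub_const _
  have hzp : HasDerivAt (fun s : ℝ => (c0path s - Complex.I) ^ m)
      ((m : ℂ) * (c0path s - Complex.I) ^ (m - 1) * ω) s :=
    by have := (hasDerivAt_zpow m _ (Or.inl (hne s))).comp s hh; exact this
  exact he.cexp.mul hzp

lemma deriv_combo (t : ℝ) (ht : 0 < t) (x : ℂ) (P : ℕ) (s : ℝ) :
    Complex.exp (-Complex.I * (c0path s - x) ^ 2 / (4 * t)) *
          (-Complex.I * (2 * (c0path s - x) * ω) / (4 * t)) *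
          (c0path s - Complex.I) ^ (1 - (P : ℤ))
        + Complex.exp (-Complex.I * (c0path s - x) ^ 2 / (4 * t)) *
          (((1 - (P : ℤ) : ℤ) : ℂ) * (c0path s - Complex.I) ^ (1 - (P : ℤ) - 1) * ω)
      = (-Complex.I / (2 * t)) * gI t x (2 - (P : ℤ)) s
        + (Complex.I * (x - Complex.I) / (2 * t)) * gI t x (1 - (P : ℤ)) s
        + ((1 : ℂ) - (P : ℂ)) * gI t x (-(P : ℤ)) s := by
  have htc : (t : ℂ) ≠ 0 := by exact_mod_cast ht.ne'
  have h0 := hne s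
  have e1 : (c0path s - Complex.I) ^ (1 - (P : ℤ))
      = (c0path s - Complex.I) ^ (-(P : ℤ)) * (c0path s - Complex.I) := by
    rw [← zpow_add_one₀ h0]; congr 1; ring
  have e2 : (c0path s - Complex.I) ^ (2 - (P : ℤ))
      = (c0path s - Complex.I) ^ (-(P : ℤ)) * (c0path s - Complex.I)
        * (c0path s - Complex.I) := by
    rw [← zpow_add_one₀ h0, ← zpow_add_one₀ h0]; congr 1; ring
  have e3 : (c0path s - Complex.I) ^ (1 - (P : ℤ) - 1)
      = (c0path s - Complex.I) ^ (-(P : ℤ)) := by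
    congr 1; ring
  rw [gI, gI, gI, e1, e2, e3]
  push_cast
  set E := Complex.exp (-Complex.I * (c0path s - x) ^ 2 / (4 * t)) with hE
  set w := (c0path s - Complex.I) ^ (-(P : ℤ)) with hw
  field_simp
  ring

end Stmt13Aux

open Stmt13Aux in
/-- The integration-by-parts recursion
`I_P = [i(x-i)/(2(P-1)t)] I_{P-1} - [i/(2(P-1)t)] I_{P-2}` for `P ≥ 2`. -/
theorem stmt13 (t ε : ℝ) (ht : 0 < t) (hε : 0 < ε) (x : ℂ) (P : ℕ) (hP : 2 ≤ P) :
    Icontour t x P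
      = (Complex.I * (x - Complex.I) / (2 * ((P : ℂ) - 1) * t)) * Icontour t x (P - 1)
        - (Complex.I / (2 * ((P : ℂ) - 1) * t)) * Icontour t x (P - 2) := by
  have htc : (t : ℂ) ≠ 0 := by exact_mod_cast ht.ne'
  have hm0 : (-(P : ℤ)) ≤ 0 := by omega
  have hm1 : (1 - (P : ℤ)) ≤ 0 := by omega
  have hm2 : (2 - (P : ℤ)) ≤ 0 := by omega
  have i0 := integrable_gI t ht x (-(P : ℤ)) hm0
  have i1 := integrable_gI t ht x (1 - (P : ℤ)) hm1
  have i2 := integrable_gI t ht x (2 - (P : ℤ)) hm2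
  -- the function we differentiate
  have hzero : (∫ s : ℝ, ((-Complex.I / (2 * t)) * gI t x (2 - (P : ℤ)) s
        + (Complex.I * (x - Complex.I) / (2 * t)) * gI t x (1 - (P : ℤ)) s
        + ((1 : ℂ) - (P : ℂ)) * gI t x (-(P : ℤ)) s)) = 0 := by
    have hderiv : ∀ s : ℝ, HasDerivAt
        (fun s : ℝ => Complex.exp (-Complex.I * (c0path s - x) ^ 2 / (4 * t)) *
          (c0path s - Complex.I) ^ (1 - (P : ℤ)))
        ((-Complex.I / (2 * t)) * gI t x (2 - (P : ℤ)) s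
          + (Complex.I * (x - Complex.I) / (2 * t)) * gI t x (1 - (P : ℤ)) s
          + ((1 : ℂ) - (P : ℂ)) * gI t x (-(P : ℤ)) s) s := by
      intro s
      have := hasDeriv_F t x (1 - (P : ℤ)) s
      rwa [deriv_combo t ht x P s] at this
    have hint : Integrable (fun s : ℝ => (-Complex.I / (2 * t)) * gI t x (2 - (P : ℤ)) s
        + (Complex.I * (x - Complex.I) / (2 * t)) * gI t x (1 - (P : ℤ)) s
        + ((1 : ℂ) - (P : ℂ)) * gI t x (-(P : ℤ)) s) :=
      ((i2.const_mul _).add (i1.const_mul _)).add (i0.const_mul _)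
    exact integral_eq_zero_of_hasDerivAt_of_integrable hderiv hint
      (integrable_g t ht x (1 - (P : ℤ)) hm1)
  have j2 : Integrable (fun s : ℝ => (-Complex.I / (2 * t)) * gI t x (2 - (P : ℤ)) s) :=
    i2.const_mul _
  have j1 : Integrable (fun s : ℝ => (Complex.I * (x - Complex.I) / (2 * t))
      * gI t x (1 - (P : ℤ)) s) := i1.const_mul _
  have j0 : Integrable (fun s : ℝ => ((1 : ℂ) - (P : ℂ)) * gI t x (-(P : ℤ)) s) :=
    i0.const_mul _
  have j21 : Integrable (fun s : ℝ => (-Complex.I / (2 * t)) * gI t x (2 - (P : ℤ)) s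
      + (Complex.I * (x - Complex.I) / (2 * t)) * gI t x (1 - (P : ℤ)) s) := j2.add j1
  rw [integral_add j21 j0, integral_add j2 j1,
    integral_const_mul, integral_const_mul, integral_const_mul] at hzero
  -- identify the integrals with Icontour
  have hI0 : Icontour t x P = ∫ s : ℝ, gI t x (-(P : ℤ)) s := rfl
  have hI1 : Icontour t x (P - 1) = ∫ s : ℝ, gI t x (1 - (P : ℤ)) s := by
    have hc1 : (-(((P - 1 : ℕ)) : ℤ)) = 1 - (P : ℤ) := by omega
    rw [Icontour, ← hc1]; rfl
  have hI2 : Icontour t x (P - 2) = ∫ s : ℝ, gI t x (2 - (P : ℤ)) s := by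
    have hc2 : (-(((P - 2 : ℕ)) : ℤ)) = 2 - (P : ℤ) := by omega
    rw [Icontour, ← hc2]; rfl
  rw [← hI0, ← hI1, ← hI2] at hzero
  have hP1 : ((P : ℂ) - 1) ≠ 0 := by
    intro h
    have : (P : ℂ) = 1 := by linear_combination h
    have : P = 1 := by exact_mod_cast this
    omega
  field_simp
  linear_combination (-2 * (t : ℂ)) * hzero
    + (Complex.I * x * Icontour t x (P - 1) - Complex.I * Icontour t x (P - 2)
        - Complex.I ^ 2 * Icontour t x (P - 1)) * (mul_inv_cancel₀ htc)
end

section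
/- Fix t, ε > 0, points p₁,…,p_N in the upper half-plane, and a smooth family of (N+1)×(N+1) complex matrices B(x) and A(x) (x ∈ ℝ) which agree except in the first column, and such that ε ∂ₓ B_{j1}(x) = −i A_{j1}(x) and ε ∂ₓ B_{jk}(x) = (i/(2t)) B_{j1}(x) + (i(p_{k−1}−x)/(2t)) B_{jk}(x) for all j and all k ≥ 2. Then ε ∂ₓ det B(x) = −i det A(x) + (i/(2t)) (Σ_{k=2}^{N+1}(p_{k−1}−x)) det B(x); consequently, wherever det B(x) ≠ 0, det A(x)/det B(x) = iε ∂ₓ log(det B̄(x)) where B̄ is obtained from B by multiplying column k (k ≥ 2) by e^{i(x−p_{k−1})²/(4tε)}. -/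
open MeasureTheory Complex Filter Set Matrix

lemma hasDerivAt_det {n : ℕ} (M : ℝ → Matrix (Fin n) (Fin n) ℂ)
    (M' : Matrix (Fin n) (Fin n) ℂ) (x : ℝ)
    (h : ∀ j k, HasDerivAt (fun x => M x j k) (M' j k) x) :
    HasDerivAt (fun x => (M x).det)
      (∑ k, ((M x).updateCol k (fun j => M' j k)).det) x := by
  have hdet : ∀ y : ℝ, (M y).det
      = ∑ σ : Equiv.Perm (Fin n), ((Equiv.Perm.sign σ : ℤ) : ℂ) * ∏ i, M y (σ i) i := by
    intro y
    simp [Matrix.det_apply, Units.smul_def, zsmul_eq_mul]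
  have key : ∀ σ : Equiv.Perm (Fin n),
      HasDerivAt (fun y => ((Equiv.Perm.sign σ : ℤ) : ℂ) * ∏ i, M y (σ i) i)
        (((Equiv.Perm.sign σ : ℤ) : ℂ) *
          ∑ k, (∏ j ∈ Finset.univ.erase k, M x (σ j) j) • M' (σ k) k) x :=
    fun σ => (HasDerivAt.fun_finsetProd (fun i _ => h (σ i) i)).const_mul _
  have hsum := HasDerivAt.fun_sum (fun σ (_ : σ ∈ (Finset.univ : Finset (Equiv.Perm (Fin n)))) => key σ)
  have heq : (fun y => ∑ σ : Equiv.Perm (Fin n), ((Equiv.Perm.sign σ : ℤ) : ℂ) * ∏ i, M y (σ i) i)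
      = fun y => (M y).det := by
    funext y; rw [hdet]
  rw [heq] at hsum
  have hcol : ∀ k : Fin n, ((M x).updateCol k fun j => M' j k).det
      = ∑ σ : Equiv.Perm (Fin n), ((Equiv.Perm.sign σ : ℤ) : ℂ) *
          ((∏ j ∈ Finset.univ.erase k, M x (σ j) j) • M' (σ k) k) := by
    intro k
    rw [Matrix.det_apply]
    refine Finset.sum_congr rfl fun σ _ => ?_
    rw [Units.smul_def, zsmul_eq_mul]
    congr 1
    rw [smul_eq_mul, ← Finset.mul_prod_erase _ _ (Finset.mem_univ k),
      Matrix.updateCol_self, mul_comm]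
    congr 1
    exact Finset.prod_congr rfl fun i hi =>
      Matrix.updateCol_ne (Finset.mem_erase.mp hi).1
  refine hsum.congr_deriv (Eq.symm ?_)
  simp_rw [Finset.mul_sum, hcol]
  rw [Finset.sum_comm]

lemma scalar (tC εC S EE D DA : ℂ) (ht : tC ≠ 0) (hε : εC ≠ 0) (hE : EE ≠ 0) (hD : D ≠ 0) :
    DA / D = Complex.I * εC *
      ((-Complex.I / (2 * tC * εC) * S) * EE * D
        + EE * ((-Complex.I * DA + Complex.I / (2 * tC) * S * D) / εC)) / (EE * D) := by
  rw [div_eq_div_iff hD (mul_ne_zero hE hD)]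
  field_simp
  ring_nf
  simp [Complex.I_sq]

/-- Determinantal identity for the `x`-derivative of `det B`, and the resulting
logarithmic-derivative formula `det A/det B = iε ∂ₓ log det B̄`, where `B̄` is
obtained from `B` by multiplying column `k ≠ 0` by `e^{i(x-p_k)²/(4tε)}`. -/
theorem stmt15 (N : ℕ) (t ε : ℝ) (ht : 0 < t) (hε : 0 < ε)
    (p : Fin (N + 1) → ℂ) (hp : ∀ k, 0 < (p k).im)
    (A B : ℝ → Matrix (Fin (N + 1)) (Fin (N + 1)) ℂ)
    (hAd : ∀ j k, Differentiable ℝ (fun x : ℝ => A x j k))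
    (hBd : ∀ j k, Differentiable ℝ (fun x : ℝ => B x j k))
    (hAB : ∀ (x : ℝ) (j k : Fin (N + 1)), k ≠ 0 → A x j k = B x j k)
    (h1 : ∀ (x : ℝ) (j : Fin (N + 1)),
      (ε : ℂ) * deriv (fun x' : ℝ => B x' j 0) x = -Complex.I * A x j 0)
    (h2 : ∀ (x : ℝ) (j k : Fin (N + 1)), k ≠ 0 →
      (ε : ℂ) * deriv (fun x' : ℝ => B x' j k) x
        = (Complex.I / (2 * t)) * B x j 0 + (Complex.I * (p k - x) / (2 * t)) * B x j k) :
    (∀ x : ℝ,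
      (ε : ℂ) * deriv (fun x' : ℝ => (B x').det) x
        = -Complex.I * (A x).det
          + (Complex.I / (2 * t)) * (∑ k ∈ Finset.univ.filter (fun k : Fin (N + 1) => k ≠ 0),
              (p k - (x : ℂ))) * (B x).det) ∧
    ∀ x : ℝ, (B x).det ≠ 0 →
      (A x).det / (B x).det
        = Complex.I * ε *
            deriv (fun x' : ℝ =>
              (Matrix.of fun j k : Fin (N + 1) =>
                if k = 0 then B x' j k
                else Complex.exp (Complex.I * ((x' : ℂ) - p k) ^ 2 / (4 * t * ε)) * B x' j k).det) x /
            (Matrix.of fun j k : Fin (N + 1) =>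
              if k = 0 then B x j k
              else Complex.exp (Complex.I * ((x : ℂ) - p k) ^ 2 / (4 * t * ε)) * B x j k).det := by
  have hεC : (ε : ℂ) ≠ 0 := by exact_mod_cast hε.ne'
  have htC : (t : ℂ) ≠ 0 := by exact_mod_cast ht.ne'
  have part1 : ∀ x : ℝ,
      (ε : ℂ) * deriv (fun x' : ℝ => (B x').det) x
        = -Complex.I * (A x).det
          + (Complex.I / (2 * t)) * (∑ k ∈ Finset.univ.filter (fun k : Fin (N + 1) => k ≠ 0),
              (p k - (x : ℂ))) * (B x).det := by
    intro x
    set B' : Matrix (Fin (N + 1)) (Fin (N + 1)) ℂ := Matrix.of fun j k =>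
      if k = 0 then -Complex.I / ε * A x j 0
      else Complex.I / (2 * t * ε) * B x j 0 + Complex.I * (p k - x) / (2 * t * ε) * B x j k
      with hB'def
    have hB' : ∀ j k, HasDerivAt (fun x' => B x' j k) (B' j k) x := by
      intro j k
      have hd := ((hBd j k) x).hasDerivAt
      rcases eq_or_ne k 0 with hk | hk
      · subst hk
        have h : deriv (fun x' : ℝ => B x' j 0) x = -Complex.I * A x j 0 / ε := by
          rw [eq_div_iff hεC]; linear_combination h1 x j
        refine hd.congr_deriv ?_
        rw [h]; simp only [hB'def, Matrix.of_apply, eq_self_iff_true, if_true]; ring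
      · have h : deriv (fun x' : ℝ => B x' j k) x
            = ((Complex.I / (2 * t)) * B x j 0 + (Complex.I * (p k - x) / (2 * t)) * B x j k) / ε := by
          rw [eq_div_iff hεC]; linear_combination h2 x j k hk
        refine hd.congr_deriv ?_
        rw [h]; simp only [hB'def, Matrix.of_apply, if_neg hk]
        field_simp
        try ring
    have hDet := hasDerivAt_det B B' x hB'
    rw [hDet.deriv]
    have hterm0 : ((B x).updateCol 0 fun j => B' j 0).det = -Complex.I / ε * (A x).det := by
      have hcoleq : (fun j => B' j 0) = (-Complex.I / (ε : ℂ)) • (fun j => A x j 0) := by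
        funext j; simp only [hB'def, Matrix.of_apply, eq_self_iff_true, if_true, Pi.smul_apply, smul_eq_mul]
      have hupd : (B x).updateCol 0 (fun j => A x j 0) = A x := by
        ext j k
        rcases eq_or_ne k 0 with hk | hk
        · subst hk; rw [Matrix.updateCol_self]
        · rw [Matrix.updateCol_ne hk, ← hAB x j k hk]
      rw [hcoleq, Matrix.det_updateCol_smul, hupd]
    have htermk : ∀ k : Fin (N + 1), k ≠ 0 → ((B x).updateCol k fun j => B' j k).det
        = Complex.I * (p k - x) / (2 * t * ε) * (B x).det := by
      intro k hk
      have hcol : (fun j => B' j k) = (Complex.I / (2 * t * ε)) • (fun j => B x j 0)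
          + (Complex.I * (p k - x) / (2 * t * ε)) • (fun j => B x j k) := by
        funext j
        simp only [hB'def, Matrix.of_apply, if_neg hk, Pi.add_apply, Pi.smul_apply, smul_eq_mul]
      rw [hcol, Matrix.det_updateCol_add, Matrix.det_updateCol_smul,
        Matrix.det_updateCol_smul, Matrix.det_updateCol_eq_zero (Ne.symm hk),
        Matrix.updateCol_eq_self]
      ring
    have hsplit : (∑ k, ((B x).updateCol k fun j => B' j k).det)
        = -Complex.I / ε * (A x).det
          + ∑ k ∈ Finset.univ.filter (fun k : Fin (N + 1) => k ≠ 0),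
              Complex.I * (p k - x) / (2 * t * ε) * (B x).det := by
      rw [← Finset.sum_filter_add_sum_filter_not Finset.univ (fun k : Fin (N + 1) => k = 0)]
      congr 1
      · rw [Finset.filter_eq', if_pos (Finset.mem_univ 0), Finset.sum_singleton, hterm0]
      · exact Finset.sum_congr rfl fun k hk => htermk k (Finset.mem_filter.mp hk).2
    rw [hsplit, ← Finset.sum_mul]
    have hfac : ∑ k ∈ Finset.univ.filter (fun k : Fin (N + 1) => k ≠ 0),
          Complex.I * (p k - x) / (2 * t * ε)
        = Complex.I / (2 * t * ε) * ∑ k ∈ Finset.univ.filter (fun k : Fin (N + 1) => k ≠ 0),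
            (p k - (x : ℂ)) := by
      rw [Finset.mul_sum]; exact Finset.sum_congr rfl fun k _ => by ring
    rw [hfac]
    field_simp
  refine ⟨part1, ?_⟩
  intro x hBx
  set F := Finset.univ.filter (fun k : Fin (N + 1) => k ≠ 0) with hF
  set E : ℝ → ℂ := fun x' => ∏ k ∈ F, Complex.exp (Complex.I * ((x' : ℂ) - p k) ^ 2 / (4 * t * ε))
    with hEdef
  have hbar : ∀ x' : ℝ, (Matrix.of fun j k : Fin (N + 1) =>
      if k = 0 then B x' j k
      else Complex.exp (Complex.I * ((x' : ℂ) - p k) ^ 2 / (4 * t * ε)) * B x' j k).det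
      = E x' * (B x').det := by
    intro x'
    have hmat : (Matrix.of fun j k : Fin (N + 1) =>
        if k = 0 then B x' j k
        else Complex.exp (Complex.I * ((x' : ℂ) - p k) ^ 2 / (4 * t * ε)) * B x' j k)
        = B x' * Matrix.diagonal (fun k => if k = 0 then 1
            else Complex.exp (Complex.I * ((x' : ℂ) - p k) ^ 2 / (4 * t * ε))) := by
      ext j k
      rcases eq_or_ne k 0 with hk | hk
      · subst hk; simp [Matrix.mul_diagonal]
      · simp [Matrix.mul_diagonal, hk, mul_comm]
    rw [hmat, Matrix.det_mul, Matrix.det_diagonal]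
    have hprod : (∏ k, (if k = 0 then (1 : ℂ)
        else Complex.exp (Complex.I * ((x' : ℂ) - p k) ^ 2 / (4 * t * ε)))) = E x' := by
      rw [hEdef, hF]
      rw [← Finset.prod_filter_mul_prod_filter_not Finset.univ (fun k : Fin (N + 1) => k = 0)]
      rw [Finset.prod_eq_one (fun k hk => if_pos (Finset.mem_filter.mp hk).2), one_mul]
      exact Finset.prod_congr rfl fun k hk => if_neg (Finset.mem_filter.mp hk).2
    rw [hprod]; ring
  have hck : ∀ k : Fin (N + 1),
      HasDerivAt (fun x' : ℝ => Complex.exp (Complex.I * ((x' : ℂ) - p k) ^ 2 / (4 * t * ε)))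
        (Complex.I * ((x : ℂ) - p k) / (2 * t * ε)
          * Complex.exp (Complex.I * ((x : ℂ) - p k) ^ 2 / (4 * t * ε))) x := by
    intro k
    have h0 : HasDerivAt (fun x' : ℝ => ((x' : ℂ) - p k)) 1 x := by
      simpa using (Complex.ofRealCLM.hasDerivAt (x := x)).sub_const (p k)
    have hsq : HasDerivAt (fun x' : ℝ => ((x' : ℂ) - p k) ^ 2) (2 * ((x : ℂ) - p k)) x := by
      simp only [pow_two]
      have := h0.mul h0
      refine this.congr_deriv ?_
      ring
    have h3' := ((hsq.const_mul Complex.I).div_const ((4 : ℂ) * t * ε)).cexp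
    convert h3' using 1
    field_simp
    ring
  have hE' : HasDerivAt E
      ((∑ k ∈ F, Complex.I * ((x : ℂ) - p k) / (2 * t * ε)) * E x) x := by
    have h := HasDerivAt.fun_finsetProd (u := F)
      (f := fun k (x' : ℝ) => Complex.exp (Complex.I * ((x' : ℂ) - p k) ^ 2 / (4 * t * ε)))
      (f' := fun k => Complex.I * ((x : ℂ) - p k) / (2 * t * ε)
          * Complex.exp (Complex.I * ((x : ℂ) - p k) ^ 2 / (4 * t * ε)))
      (fun k _ => hck k)
    refine h.congr_deriv ?_
    rw [Finset.sum_mul]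
    refine Finset.sum_congr rfl fun k hk => ?_
    simp only [smul_eq_mul, hEdef]
    rw [← Finset.prod_erase_mul F _ hk]
    ring
  have hDdet : HasDerivAt (fun x' : ℝ => (B x').det) (deriv (fun x' : ℝ => (B x').det) x) x := by
    have hB'x : ∀ j k, HasDerivAt (fun x' => B x' j k)
        ((Matrix.of fun j k : Fin (N + 1) => deriv (fun x' : ℝ => B x' j k) x) j k) x :=
      fun j k => ((hBd j k) x).hasDerivAt
    have h := hasDerivAt_det B _ x hB'x
    rw [h.deriv]; exact h
  have hfun : (fun x' : ℝ => (Matrix.of fun j k : Fin (N + 1) =>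
      if k = 0 then B x' j k
      else Complex.exp (Complex.I * ((x' : ℂ) - p k) ^ 2 / (4 * t * ε)) * B x' j k).det)
      = fun x' => E x' * (B x').det := funext hbar
  rw [hbar x, hfun, (hE'.fun_mul hDdet).deriv]
  have hEx : E x ≠ 0 := Finset.prod_ne_zero_iff.mpr fun k _ => Complex.exp_ne_zero _
  have hS1 : (∑ k ∈ F, Complex.I * ((x : ℂ) - p k) / (2 * t * ε))
      = -Complex.I / (2 * t * ε) * ∑ k ∈ F, (p k - (x : ℂ)) := by
    rw [Finset.mul_sum]; exact Finset.sum_congr rfl fun k _ => by ring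
  have hDval : deriv (fun x' : ℝ => (B x').det) x
      = (-Complex.I * (A x).det
          + (Complex.I / (2 * t)) * (∑ k ∈ F, (p k - (x : ℂ))) * (B x).det) / ε := by
    rw [eq_div_iff hεC]; linear_combination part1 x
  rw [hS1, hDval]
  exact scalar t ε _ _ _ _ htC hεC hEx hBx
end
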